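/- Let x₁ be a unit dual quaternion (star x₁ * x₁ = 1) and let v be a skew-adjoint dual quaternion (star v = -v). Define the path x(τ) = x₁ * exp(τ • v). Then for all τ₁, τ₂ ∈ ℝ, the relative rigid-body transformation between two interpolated poses is star (x(τ₁)) * x(τ₂) = exp((τ₂ - τ₁) • v). In particular, equally spaced values of the interpolation parameter τ yield equal relative screw displacements along the path. -/

import Mathlib

open Quaternion

/-- Componentwise star (quaternion conjugation on primary and dual parts)
on the dual quaternions `DualNumber ℍ[ℝ]`. -/
noncomputable instance : Star (DualNumber ℍ[ℝ]) :=
  ⟨fun x => TrivSqZeroExt.inl (star x.fst) + TrivSqZeroExt.inr (star x.snd)⟩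

@[simp] theorem DualQuaternion.fst_star (x : DualNumber ℍ[ℝ]) :
    (star x).fst = star x.fst := by
  show (TrivSqZeroExt.inl (star x.fst) + TrivSqZeroExt.inr (star x.snd)).fst = _
  simp

@[simp] theorem DualQuaternion.snd_star (x : DualNumber ℍ[ℝ]) :
    (star x).snd = star x.snd := by
  show (TrivSqZeroExt.inl (star x.fst) + TrivSqZeroExt.inr (star x.snd)).snd = _
  simp

noncomputable instance : StarRing (DualNumber ℍ[ℝ]) where
  star_involutive x := TrivSqZeroExt.ext (by simp) (by simp)
  star_mul x y := TrivSqZeroExt.ext (by simp [TrivSqZeroExt.fst_mul])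
    (by
      simp [TrivSqZeroExt.snd_mul, MulOpposite.smul_eq_mul_unop, smul_eq_mul]
      abel)
  star_add x y := TrivSqZeroExt.ext (by simp) (by simp)

theorem DualQuaternion.star_smul (r : ℝ) (x : DualNumber ℍ[ℝ]) :
    star (r • x) = r • star x :=
  TrivSqZeroExt.ext (by simp) (by simp)

instance : ContinuousStar (DualNumber ℍ[ℝ]) := by
  constructor
  show Continuous fun x : DualNumber ℍ[ℝ] =>
      TrivSqZeroExt.inl (star x.fst) + TrivSqZeroExt.inr (star x.snd)
  exact (TrivSqZeroExt.continuous_inl.comp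
      (continuous_star.comp TrivSqZeroExt.continuous_fst)).add
    (TrivSqZeroExt.continuous_inr.comp
      (continuous_star.comp TrivSqZeroExt.continuous_snd))

set_option maxHeartbeats 1000000 in
/-- **Equal interpolation steps give equal relative screw displacements.**
For a unit dual quaternion `x₁` and skew-adjoint `v`, the path
`x(τ) = x₁ * exp (τ • v)` satisfies
`star (x τ₁) * x τ₂ = exp ((τ₂ - τ₁) • v)` for all `τ₁ τ₂`. -/
theorem sclerp_relative_transformation (x₁ v : DualNumber ℍ[ℝ])
    (hx₁ : star x₁ * x₁ = 1) (hv : star v = -v) :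
    ∀ τ₁ τ₂ : ℝ,
      star (x₁ * NormedSpace.exp (τ₁ • v)) * (x₁ * NormedSpace.exp (τ₂ • v)) =
        NormedSpace.exp ((τ₂ - τ₁) • v) := by
  intro τ₁ τ₂
  have hstar : star (τ₁ • v) = -(τ₁ • v) := by
    rw [DualQuaternion.star_smul, hv, smul_neg]
  have hcomm : Commute (-(τ₁ • v)) (τ₂ • v) := by
    have := @IsScalarTower.right ℝ (DualNumber ℍ[ℝ]) _ _ _
    exact (((Commute.refl v).smul_left τ₁).smul_right τ₂).neg_left
  calc star (x₁ * NormedSpace.exp (τ₁ • v)) * (x₁ * NormedSpace.exp (τ₂ • v))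
      = NormedSpace.exp (-(τ₁ • v)) * (star x₁ * x₁) * NormedSpace.exp (τ₂ • v) := by
        rw [star_mul, NormedSpace.star_exp, hstar]; simp only [mul_assoc]
    _ = NormedSpace.exp (-(τ₁ • v)) * NormedSpace.exp (τ₂ • v) := by rw [hx₁, mul_one]
    _ = NormedSpace.exp (-(τ₁ • v) + τ₂ • v) := by
      letI : NormedAlgebra ℚ (DualNumber ℍ[ℝ]) := NormedAlgebra.restrictScalars ℚ ℝ _
      exact (NormedSpace.exp_add_of_commute hcomm).symm
    _ = NormedSpace.exp ((τ₂ - τ₁) • v) := by rw [sub_smul, ← neg_add_eq_sub]
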